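/- Let C be a monoidal category equipped with a commutor σ, with local rules τ. For an object B define left-bracketed tensor powers by B^{⊗0} = I (the unit object) and B^{⊗(n+1)} = B^{⊗n} ⊗ B. For 0 ≤ k ≤ r let T_k be the endomorphism of B^{⊗(r+2)} obtained from τ^{B^{⊗k}}_{B,B} : (B^{⊗k}⊗B)⊗B ⟶ (B^{⊗k}⊗B)⊗B (an endomorphism of B^{⊗(k+2)}) by tensoring on the right with the identity of B a total of (r−k) times. Then for every r ≥ 0, the commutor σ_{B,B^{⊗(r+1)}} : B ⊗ B^{⊗(r+1)} ⟶ B^{⊗(r+2)} satisfies σ_{B,B^{⊗(r+1)}} ∘ γ = T_r ∘ T_{r−1} ∘ ⋯ ∘ T_1 ∘ T_0, where γ : B^{⊗(r+2)} ≅ B ⊗ B^{⊗(r+1)} is the canonical coherence isomorphism built from associators and unitors. -/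

import Mathlib

open CategoryTheory MonoidalCategory

universe v u

/-- A commutor on a monoidal category: a natural family of isomorphisms
`σ_{A,B} : A ⊗ B ⟶ B ⊗ A` satisfying the unit, symmetry and coboundary axioms.
A monoidal category with a commutor is a coboundary category. -/
structure Commutor (V : Type u) [Category.{v} V] [MonoidalCategory V] where
  σ : ∀ A B : V, A ⊗ B ⟶ B ⊗ A
  naturality : ∀ {A A' B B' : V} (f : A ⟶ A') (g : B ⟶ B'),
    (f ⊗ₘ g) ≫ σ A' B' = σ A B ≫ (g ⊗ₘ f)
  unit_right : ∀ A : V, σ A (𝟙_ V) = (ρ_ A).hom ≫ (λ_ A).inv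
  unit_left : ∀ B : V, σ (𝟙_ V) B = (λ_ B).hom ≫ (ρ_ B).inv
  symmetry : ∀ A B : V, σ A B ≫ σ B A = 𝟙 (A ⊗ B)
  coboundary : ∀ A B C : V,
    (α_ A B C).hom ≫ (𝟙 A ⊗ₘ σ B C) ≫ σ A (C ⊗ B) ≫ (α_ C B A).hom =
      (σ A B ⊗ₘ 𝟙 C) ≫ σ (B ⊗ A) C

/-- The local rule `τ^A_{B,C} : (A⊗B)⊗C ⟶ (A⊗C)⊗B`. -/
def localRule {V : Type u} [Category.{v} V] [MonoidalCategory V] (c : Commutor V)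
    (A B C : V) : (A ⊗ B) ⊗ C ⟶ (A ⊗ C) ⊗ B :=
  (c.σ A B ⊗ₘ 𝟙 C) ≫ (α_ B A C).hom ≫ c.σ B (A ⊗ C)


variable {V : Type u} [Category.{v} V] [MonoidalCategory V]

/-- Left-bracketed tensor powers: `B^{⊗0} = I`, `B^{⊗(n+1)} = B^{⊗n} ⊗ B`. -/
def tpow (B : V) : ℕ → V
  | 0 => 𝟙_ V
  | n + 1 => tpow B n ⊗ B

/-- Tensor an endomorphism of `B^{⊗n}` on the right with `1_B`, `m` times,
giving an endomorphism of `B^{⊗(n+m)}`. -/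
def padPow (B : V) : ∀ (n m : ℕ), (tpow B n ⟶ tpow B n) → (tpow B (n + m) ⟶ tpow B (n + m))
  | _, 0, f => f
  | n, m + 1, f => padPow B n m f ⊗ₘ 𝟙 B

/-- The endomorphism `T_k` of `B^{⊗(r+2)}`: the local rule `τ^{B^{⊗k}}_{B,B}`
tensored on the right with `1_B` a total of `r - k` times. -/
def Tk (c : Commutor V) (B : V) (r k : ℕ) (h : k ≤ r) :
    tpow B (r + 2) ⟶ tpow B (r + 2) :=
  eqToHom (congrArg (tpow B) (by omega : r + 2 = (k + 2) + (r - k))) ≫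
    padPow B (k + 2) (r - k) (localRule c (tpow B k) B B) ≫
      eqToHom (congrArg (tpow B) (by omega : (k + 2) + (r - k) = r + 2))

/-- The composite `T_k ≫ T_{k-1} ≫ ⋯` in diagrammatic order:
`Tcomp c B r k = T_0 ≫ T_1 ≫ ⋯ ≫ T_k` (so applying `T_0` first). -/
def Tcomp (c : Commutor V) (B : V) (r : ℕ) : ∀ k, k ≤ r → (tpow B (r + 2) ⟶ tpow B (r + 2))
  | 0, _ => Tk c B r 0 (Nat.zero_le r)
  | k + 1, h => Tcomp c B r k (Nat.le_of_succ_le h) ≫ Tk c B r (k + 1) h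

/-- The canonical coherence isomorphism `γ : B^{⊗(n+1)} ≅ B ⊗ B^{⊗n}`,
built from associators and unitors. -/
def gam (B : V) : ∀ n : ℕ, tpow B (n + 1) ≅ B ⊗ tpow B n
  | 0 => λ_ B ≪≫ (ρ_ B).symm
  | n + 1 => whiskerRightIso (gam B n) B ≪≫ α_ B (tpow B n) B


lemma eqToHom_tensor_id {X Y : V} (h : X = Y) (B : V) :
    eqToHom h ⊗ₘ 𝟙 B = eqToHom (congrArg (· ⊗ B) h) := by
  subst h; simp

lemma padPow_congr (B : V) (n : ℕ) {m m' : ℕ} (h : m = m') (f : tpow B n ⟶ tpow B n) :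
    padPow B n m f =
      eqToHom (congrArg (tpow B) (by rw [h])) ≫ padPow B n m' f ≫
        eqToHom (congrArg (tpow B) (by rw [h] : n + m' = n + m)) := by
  subst h; simp

lemma eqToHom_wr {X Y : V} (h : X = Y) (B : V) :
    eqToHom h ▷ B = eqToHom (congrArg (· ⊗ B) h) := by
  subst h; simp

lemma Tk_succ (c : Commutor V) (B : V) (r k : ℕ) (h : k ≤ r) :
    Tk c B (r+1) k (h.trans (Nat.le_succ r)) = Tk c B r k h ⊗ₘ 𝟙 B := by
  unfold Tk
  rw [padPow_congr B (k+2) (Nat.succ_sub h) (localRule c (tpow B k) B B)]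
  have e : padPow B (k+2) ((r-k)+1) (localRule c (tpow B k) B B)
      = padPow B (k+2) (r-k) (localRule c (tpow B k) B B) ⊗ₘ 𝟙 B := rfl
  rw [e]
  simp only [tensorHom_id, comp_whiskerRight, eqToHom_wr, eqToHom_trans,
    Category.assoc, eqToHom_trans_assoc]
  erw [Category.assoc, eqToHom_trans]
  rfl

lemma Tk_self (c : Commutor V) (B : V) (r : ℕ) (h : r ≤ r) :
    Tk c B r r h = localRule c (tpow B r) B B := by
  unfold Tk
  rw [padPow_congr B (r+2) (Nat.sub_self r) (localRule c (tpow B r) B B)]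
  show eqToHom _ ≫ (eqToHom _ ≫ localRule c (tpow B r) B B ≫ eqToHom _) ≫ eqToHom _ = _
  have aux : ∀ {X Y Z : V} (p1 : Y = X) (p2 : X = Y) (f : Y ⟶ Y) (p3 : Y = Z) (p4 : Z = Y),
      eqToHom p1 ≫ (eqToHom p2 ≫ f ≫ eqToHom p3) ≫ eqToHom p4 = f := by
    intros _ _ _ _ p2 _ _ p4; subst p2; subst p4; simp
  exact aux _ _ _ _ _

lemma Tcomp_succ (c : Commutor V) (B : V) (r : ℕ) : ∀ k (h : k ≤ r),
    Tcomp c B (r+1) k (h.trans (Nat.le_succ r)) = Tcomp c B r k h ⊗ₘ 𝟙 B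
  | 0, _ => by
    show Tk c B (r+1) 0 _ = Tk c B r 0 _ ⊗ₘ 𝟙 B
    rw [Tk_succ c B r 0 (Nat.zero_le r)]
  | k+1, h => by
    show Tcomp c B (r+1) k _ ≫ Tk c B (r+1) (k+1) _ = (Tcomp c B r k _ ≫ Tk c B r (k+1) h) ⊗ₘ 𝟙 B
    rw [Tcomp_succ c B r k (Nat.le_of_succ_le h), Tk_succ c B r (k+1) h]
    erw [tensorHom_comp_tensorHom, Category.comp_id]

/-- The commutor `σ_{B,B^{⊗(r+1)}}` is the composite of the local rules:
`σ_{B,B^{⊗(r+1)}} ∘ γ = T_r ∘ T_{r-1} ∘ ⋯ ∘ T_1 ∘ T_0`. -/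
theorem commutor_eq_localRules (c : Commutor V) (B : V) (r : ℕ) :
    (gam B (r + 1)).hom ≫ c.σ B (tpow B (r + 1)) = Tcomp c B r r le_rfl := by
  induction r with
  | zero =>
    rw [show Tcomp c B 0 0 le_rfl = Tk c B 0 0 le_rfl from rfl, Tk_self]
    simp [gam, localRule, c.unit_left, tpow]
  | succ n ih =>
    have key : (α_ B (tpow B (n+1)) B).hom ≫ c.σ B (tpow B (n+1) ⊗ B)
        = (c.σ B (tpow B (n+1)) ⊗ₘ 𝟙 B) ≫ localRule c (tpow B (n+1)) B B := by
      rw [localRule, ← Category.assoc, tensorHom_comp_tensorHom, c.symmetry, Category.comp_id,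
        id_tensorHom_id, Category.id_comp]
    show (((gam B (n+1)).hom ▷ B) ≫ (α_ B (tpow B (n+1)) B).hom) ≫ c.σ B (tpow B (n+1) ⊗ B)
        = Tcomp c B (n+1) n (Nat.le_succ n) ≫ Tk c B (n+1) (n+1) le_rfl
    rw [Category.assoc, key, ← Category.assoc, ← tensorHom_id ((gam B (n+1)).hom) B,
      tensorHom_comp_tensorHom, Category.comp_id, ih]
    erw [← Tcomp_succ c B n n le_rfl,
      Tk_self c B (n+1) le_rfl]
    rfl
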